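/- If S is a Suslin line, then the product space S × S (with the product of the order topologies) does not have the countable chain condition; indeed, there exists an ω₁-indexed family of pairwise disjoint nonempty open subsets of S × S. -/

import Mathlib

/-- A topological space has the countable chain condition (CCC) if every family of
pairwise disjoint nonempty open subsets is countable. -/
def TopCCC (X : Type*) [TopologicalSpace X] : Prop :=
  ∀ 𝒰 : Set (Set X), (∀ U ∈ 𝒰, IsOpen U) → (∀ U ∈ 𝒰, U.Nonempty) →
    𝒰.Pairwise Disjoint → 𝒰.Countable

/-- A Suslin line is a linearly ordered set, equipped with the order topology, which is
unbounded (no minimum and no maximum), densely ordered, complete (every nonempty set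
bounded above has a least upper bound and every nonempty set bounded below has a greatest
lower bound), has the countable chain condition but is not separable. -/
def IsSuslinLine (S : Type*) [LinearOrder S] [TopologicalSpace S] [OrderTopology S] :
    Prop :=
  NoMinOrder S ∧ NoMaxOrder S ∧ DenselyOrdered S ∧
    (∀ s : Set S, s.Nonempty → BddAbove s → ∃ a, IsLUB s a) ∧
    (∀ s : Set S, s.Nonempty → BddBelow s → ∃ a, IsGLB s a) ∧
    TopCCC S ∧ ¬TopologicalSpace.SeparableSpace S

/-- Key step: in a nonseparable order-topological linear order without endpoints,
for any countable set `D` there is an interval `Ioo a c` avoiding `D`, with a point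
`b` inside. -/
private theorem suslin_aux {S : Type*} [LinearOrder S] [TopologicalSpace S]
    [OrderTopology S] [NoMinOrder S] [NoMaxOrder S]
    (hsep : ¬TopologicalSpace.SeparableSpace S) (D : Set S) (hD : D.Countable) :
    ∃ t : S × S × S, t.1 < t.2.1 ∧ t.2.1 < t.2.2 ∧ ∀ d ∈ D, d ∉ Set.Ioo t.1 t.2.2 := by
  have hnd : ¬Dense D := fun hd => hsep ⟨D, hD, hd⟩
  obtain ⟨x, hx⟩ : ∃ x, x ∉ closure D := by
    by_contra hc
    push_neg at hc
    exact hnd hc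
  have hmem : (closure D)ᶜ ∈ nhds x := isClosed_closure.isOpen_compl.mem_nhds hx
  obtain ⟨l, u, hlu, hsub⟩ := mem_nhds_iff_exists_Ioo_subset.1 hmem
  exact ⟨(l, x, u), hlu.1, hlu.2, fun d hd hmemd => (hsub hmemd) (subset_closure hd)⟩

private theorem suslin_iio_countable {α : Type*} (i : (Cardinal.aleph 1).ord.ToType)
    (f : ∀ j, j < i → α) : {x | ∃ j, ∃ hj : j < i, f j hj = x}.Countable := by
  have hcnt : (Set.Iio i).Countable :=
    (Cardinal.countable_iff_lt_aleph_one _).2 (Cardinal.mk_Iio_ord_toType i)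
  have := hcnt.to_subtype
  have : {x | ∃ j, ∃ hj : j < i, f j hj = x} =
      Set.range (fun j : Set.Iio i => f j.1 j.2) := by
    ext x
    constructor
    · rintro ⟨j, hj, rfl⟩
      exact ⟨⟨j, hj⟩, rfl⟩
    · rintro ⟨⟨j, hj⟩, rfl⟩
      exact ⟨j, hj, rfl⟩
  rw [this]
  exact Set.countable_range _

private noncomputable def suslinTriple {S : Type*} [LinearOrder S] [TopologicalSpace S]
    [OrderTopology S] [NoMinOrder S] [NoMaxOrder S]
    (hsep : ¬TopologicalSpace.SeparableSpace S) :
    (Cardinal.aleph 1).ord.ToType → S × S × S :=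
  (IsWellFounded.wf (r := ((· < ·) : (Cardinal.aleph 1).ord.ToType →
      (Cardinal.aleph 1).ord.ToType → Prop))).fix fun i rec =>
    Classical.choose (suslin_aux hsep {x | ∃ j, ∃ hj : j < i, (rec j hj).2.1 = x}
      (suslin_iio_countable i _))

private theorem suslinTriple_spec {S : Type*} [LinearOrder S] [TopologicalSpace S]
    [OrderTopology S] [NoMinOrder S] [NoMaxOrder S]
    (hsep : ¬TopologicalSpace.SeparableSpace S) (i : (Cardinal.aleph 1).ord.ToType) :
    (suslinTriple hsep i).1 < (suslinTriple hsep i).2.1 ∧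
    (suslinTriple hsep i).2.1 < (suslinTriple hsep i).2.2 ∧
    ∀ j, j < i → (suslinTriple hsep j).2.1 ∉
      Set.Ioo (suslinTriple hsep i).1 (suslinTriple hsep i).2.2 := by
  have heq : suslinTriple hsep i = Classical.choose
      (suslin_aux hsep {x | ∃ j, ∃ hj : j < i, (suslinTriple hsep j).2.1 = x}
        (suslin_iio_countable i _)) :=
    WellFounded.fix_eq _ _ i
  obtain ⟨h1, h2, h3⟩ := Classical.choose_spec
    (suslin_aux hsep {x | ∃ j, ∃ hj : j < i, (suslinTriple hsep j).2.1 = x}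
      (suslin_iio_countable i _))
  rw [heq]
  exact ⟨h1, h2, fun j hj => h3 _ ⟨j, hj, rfl⟩⟩

/-- If `S` is a Suslin line then `S × S` does not have the countable chain condition;
indeed there is an `ω₁`-indexed family of pairwise disjoint nonempty open subsets of
`S × S`. -/
theorem stmt_11 (S : Type*) [LinearOrder S] [TopologicalSpace S] [OrderTopology S]
    (h : IsSuslinLine S) :
    ¬TopCCC (S × S) ∧
      ∃ U : (Cardinal.aleph 1).ord.ToType → Set (S × S),
        (∀ i, IsOpen (U i)) ∧ (∀ i, (U i).Nonempty) ∧
        Pairwise fun i j => Disjoint (U i) (U j) := by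
  obtain ⟨hmin, hmax, hdense, _, _, _, hsep⟩ := h
  haveI := hmin; haveI := hmax; haveI := hdense
  set t := suslinTriple (S := S) hsep with ht_def
  have spec := suslinTriple_spec (S := S) hsep
  -- The family of open rectangles
  set U : (Cardinal.aleph 1).ord.ToType → Set (S × S) :=
    fun i => Set.Ioo (t i).1 (t i).2.1 ×ˢ Set.Ioo (t i).2.1 (t i).2.2 with hU_def
  have hopen : ∀ i, IsOpen (U i) := fun i => isOpen_Ioo.prod isOpen_Ioo
  have hne : ∀ i, (U i).Nonempty := by
    intro i
    obtain ⟨x, hx⟩ := exists_between (spec i).1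
    obtain ⟨y, hy⟩ := exists_between (spec i).2.1
    exact ⟨(x, y), hx, hy⟩
  have hpair : Pairwise fun i j => Disjoint (U i) (U j) := by
    have key : ∀ i j : (Cardinal.aleph 1).ord.ToType, i < j → Disjoint (U i) (U j) := by
      intro i j hij
      rw [Set.disjoint_left]
      rintro ⟨x, y⟩ ⟨hxi, hyi⟩ ⟨hxj, hyj⟩
      have hb : (t i).2.1 ∉ Set.Ioo (t j).1 (t j).2.2 := (spec j).2.2 i hij
      rcases lt_or_ge (t j).1 (t i).2.1 with h1 | h1
      · have h2 : (t j).2.2 ≤ (t i).2.1 := by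
          by_contra h2
          exact hb ⟨h1, lt_of_not_ge h2⟩
        exact absurd (hyj.2.trans_le (h2.trans hyi.1.le)) (lt_irrefl _)
      · exact absurd (hxi.2.trans_le (h1.trans hxj.1.le)) (lt_irrefl _)
    intro i j hij
    rcases hij.lt_or_gt with hlt | hlt
    · exact key i j hlt
    · exact (key j i hlt).symm
  refine ⟨?_, U, hopen, hne, hpair⟩
  intro hccc
  have hUinj : Function.Injective U := by
    intro i j hUij
    by_contra hij
    have hd : Disjoint (U i) (U j) := hpair hij
    rw [hUij] at hd
    exact (hne j).ne_empty (disjoint_self.1 hd)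
  have hcount : (Set.range U).Countable := by
    apply hccc
    · rintro _ ⟨i, rfl⟩; exact hopen i
    · rintro _ ⟨i, rfl⟩; exact hne i
    · rintro _ ⟨i, rfl⟩ _ ⟨j, rfl⟩ hne'
      exact hpair (fun hij => hne' (by rw [hij]))
  have : Countable (Cardinal.aleph 1).ord.ToType := by
    haveI := hcount.to_subtype
    exact Function.Injective.countable (f := fun i => (⟨U i, Set.mem_range_self i⟩ :
      Set.range U)) (fun i j hij => hUinj (Subtype.ext_iff.1 hij))
  have hmk : Cardinal.mk ((Cardinal.aleph 1).ord.ToType) = Cardinal.aleph 1 := by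
    rw [Cardinal.mk_toType, Cardinal.card_ord]
  have hle : Cardinal.mk ((Cardinal.aleph 1).ord.ToType) ≤ Cardinal.aleph0 :=
    Cardinal.mk_le_aleph0
  rw [hmk] at hle
  exact absurd hle (not_le.2 Cardinal.aleph0_lt_aleph_one)
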